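/- arXiv:1502.07928 — 4 statements merged into one kernel-verified Lean document; each statement's English description precedes it below -/
import Mathlib

section
/- Let (C, ℓ_C) and (D, ℓ_D) be orthogonalizable Λ-spaces, let A : C → D be a Λ-linear map, and let (v_1, …, v_n) be an orthogonal ordered basis for C. Then there exists an orthogonal ordered basis (v_1', …, v_n') of C such that: (i) ℓ_C(v_i') = ℓ_C(v_i) and ℓ_D(A v_i') ≤ ℓ_D(A v_i) for each i; and (ii) letting U = {i ∈ {1,…,n} : A v_i' ≠ 0}, the ordered collection (A v_i' : i ∈ U) is orthogonal in D (in particular (v_i' : i ∉ U) is an orthogonal ordered basis of ker A). -/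
/-!
Formalization setup following Usher–Zhang, "Persistent homology and Floer–Novikov theory".

We fix an additive subgroup `Γ ≤ ℝ` and abstract the Novikov field `Λ = Λ^{K,Γ}` as a field
`Λ` equipped with a valuation `ν : Λ → ℝ ∪ {∞}` (encoded in `EReal`, with `ν x = ⊤ ↔ x = 0`)
satisfying (V1),(V2),(V3), whose values on nonzero elements lie in (and fill out) `Γ`.

Filtration functions `ℓ : C → ℝ ∪ {-∞}` are encoded as `EReal`-valued functions which never
take the value `⊤`, with `ℓ x = ⊥ ↔ x = 0`.
-/

noncomputable section

/-- The Novikov field `Λ^{K,Γ}` together with its valuation `ν(Σ a_g T^g) = min {g : a_g ≠ 0}`: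
a field `Λ` with a function `ν : Λ → ℝ ∪ {∞}` such that (V1) `ν x = ∞ ↔ x = 0`,
(V2) `ν (xy) = ν x + ν y`, (V3) `ν (x+y) ≥ min (ν x) (ν y)`, and the values of `ν` on
nonzero elements are exactly the elements of `Γ`. -/
structure NovikovStructure (Γ : AddSubgroup ℝ) (Λ : Type*) [Field Λ] where
  ν : Λ → EReal
  ν_eq_top_iff : ∀ x : Λ, ν x = ⊤ ↔ x = 0
  ν_mul : ∀ x y : Λ, ν (x * y) = ν x + ν y
  min_le_ν_add : ∀ x y : Λ, min (ν x) (ν y) ≤ ν (x + y)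
  ν_mem : ∀ x : Λ, x ≠ 0 → ∃ g : Γ, ν x = ((g : ℝ) : EReal)
  ν_surj : ∀ g : Γ, ∃ x : Λ, ν x = ((g : ℝ) : EReal)

/-- `(C, ℓ)` is a non-Archimedean normed vector space over `Λ` (Definition 2.2):
(F1) `ℓ x = -∞ ↔ x = 0`; (F2) `ℓ (λ • x) = ℓ x - ν λ`; (F3) `ℓ (x+y) ≤ max (ℓ x) (ℓ y)`. -/
structure IsNonArchNorm {Γ : AddSubgroup ℝ} {Λ : Type*} [Field Λ] (NS : NovikovStructure Γ Λ)
    {C : Type*} [AddCommGroup C] [Module Λ C] (ℓ : C → EReal) : Prop where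
  eq_bot_iff : ∀ x : C, ℓ x = ⊥ ↔ x = 0
  ne_top : ∀ x : C, ℓ x ≠ ⊤
  smul_eq : ∀ (a : Λ) (x : C), ℓ (a • x) = ℓ x - NS.ν a
  add_le : ∀ x y : C, ℓ (x + y) ≤ max (ℓ x) (ℓ y)

/-- A finite ordered family `(w i)` in `(C, ℓ)` is orthogonal:
`ℓ (∑ λᵢ • wᵢ) = maxᵢ ℓ (λᵢ • wᵢ)` for all coefficients `λᵢ ∈ Λ` (Definition 2.8). -/
def IsOrthFamily (Λ : Type*) [Field Λ] {C : Type*} [AddCommGroup C] [Module Λ C]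
    (ℓ : C → EReal) {ι : Type*} [Fintype ι] (w : ι → C) : Prop :=
  ∀ a : ι → Λ, ℓ (∑ i, a i • w i) = ⨆ i, ℓ (a i • w i)

/-- Two subspaces `V, W` of `(C, ℓ)` are orthogonal if
`ℓ (v + w) = max (ℓ v) (ℓ w)` for all `v ∈ V`, `w ∈ W` (Definition 2.8). -/
def AreOrthogonal {Λ : Type*} [Field Λ] {C : Type*} [AddCommGroup C] [Module Λ C]
    (ℓ : C → EReal) (V W : Submodule Λ C) : Prop :=
  ∀ v ∈ V, ∀ w ∈ W, ℓ (v + w) = max (ℓ v) (ℓ w)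

/-- An orthogonalizable `Λ`-space: a finite-dimensional non-Archimedean normed `Λ`-vector
space admitting an orthogonal (finite) basis. -/
def IsOrthogonalizable {Γ : AddSubgroup ℝ} {Λ : Type*} [Field Λ] (NS : NovikovStructure Γ Λ)
    {C : Type*} [AddCommGroup C] [Module Λ C] (ℓ : C → EReal) : Prop :=
  IsNonArchNorm NS ℓ ∧ ∃ (n : ℕ) (b : Module.Basis (Fin n) Λ C), IsOrthFamily Λ ℓ ⇑b

section Helpers
open Classical
variable {Γ : AddSubgroup ℝ} {Λ : Type*} [Field Λ] {NS : NovikovStructure Γ Λ}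

lemma nu_real {x : Λ} (hx : x ≠ 0) : ∃ g : ℝ, NS.ν x = (g : EReal) := by
  obtain ⟨g, hg⟩ := NS.ν_mem x hx; exact ⟨g, hg⟩

lemma nu_one : NS.ν (1 : Λ) = 0 := by
  obtain ⟨g, hg⟩ := nu_real (one_ne_zero : (1:Λ) ≠ 0)
  have h := NS.ν_mul 1 1
  rw [mul_one, hg, ← EReal.coe_add] at h
  have : g = g + g := EReal.coe_eq_coe_iff.mp h
  have : g = 0 := by linarith
  rw [hg, this]; rfl

lemma nu_neg (x : Λ) : NS.ν (-x) = NS.ν x := by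
  have h1 : NS.ν (-1 : Λ) = 0 := by
    obtain ⟨g, hg⟩ := nu_real (neg_ne_zero.mpr (one_ne_zero : (1:Λ) ≠ 0))
    have h := NS.ν_mul (-1) (-1)
    rw [neg_mul_neg, one_mul, nu_one, hg, ← EReal.coe_add] at h
    have : (0:ℝ) = g + g := by exact_mod_cast h
    have hg0 : g = 0 := by linarith
    rw [hg, hg0]; rfl
  have := NS.ν_mul (-1) x
  rwa [neg_one_mul, h1, zero_add] at this

lemma nu_add_inv {x : Λ} (hx : x ≠ 0) : NS.ν x + NS.ν x⁻¹ = 0 := by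
  have := NS.ν_mul x x⁻¹
  rw [mul_inv_cancel₀ hx, nu_one] at this
  exact this.symm

variable {C : Type*} [AddCommGroup C] [Module Λ C] {ℓ : C → EReal}

lemma l_zero (hl : IsNonArchNorm NS ℓ) : ℓ 0 = ⊥ := (hl.eq_bot_iff 0).mpr rfl

lemma l_neg (hl : IsNonArchNorm NS ℓ) (x : C) : ℓ (-x) = ℓ x := by
  have : (-x) = (-1 : Λ) • x := by rw [neg_one_smul]
  rw [this, hl.smul_eq, nu_neg, nu_one]
  simp [sub_eq_add_neg]

lemma l_sub_le (hl : IsNonArchNorm NS ℓ) (x y : C) : ℓ (x - y) ≤ max (ℓ x) (ℓ y) := by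
  rw [sub_eq_add_neg]
  simpa [l_neg hl] using hl.add_le x (-y)

lemma l_sum_le (hl : IsNonArchNorm NS ℓ) {ι : Type*} [Fintype ι] (y : ι → C) :
    ℓ (∑ i, y i) ≤ ⨆ i, ℓ (y i) := by
  classical
  have H : ∀ s : Finset ι, ℓ (∑ i ∈ s, y i) ≤ ⨆ i, ℓ (y i) := by
    intro s
    induction s using Finset.induction_on with
    | empty => simp [l_zero hl]
    | insert _ _ hns ih =>
        rw [Finset.sum_insert hns]
        exact le_trans (hl.add_le _ _) (max_le (le_iSup (fun i => ℓ (y i)) _) ih)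
  exact H Finset.univ

lemma ereal_iSup_split {ι : Type*} (f : ι → EReal) (i₀ : ι) :
    (⨆ i, f i) = max (f i₀) (⨆ i, if i = i₀ then ⊥ else f i) := by
  apply le_antisymm
  · refine iSup_le fun i => ?_
    by_cases h : i = i₀
    · subst h; exact le_max_left _ _
    · refine le_trans ?_ (le_max_right _ _)
      refine le_trans ?_ (le_iSup (fun i => if i = i₀ then ⊥ else f i) i)
      simp [h]
  · refine max_le (le_iSup f i₀) (iSup_le fun i => ?_)
    by_cases h : i = i₀ <;> simp [h, le_iSup f i]

lemma fin_iSup_split {m : ℕ} (f : Fin (m+1) → EReal) (i₀ : Fin (m+1)) :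
    (⨆ i, f i) = max (f i₀) (⨆ j, f (i₀.succAbove j)) := by
  apply le_antisymm
  · refine iSup_le fun i => ?_
    by_cases h : i = i₀
    · subst h; exact le_max_left _ _
    · obtain ⟨j, rfl⟩ := Fin.exists_succAbove_eq h
      exact le_trans (le_iSup (fun j => f (i₀.succAbove j)) j) (le_max_right _ _)
  · exact max_le (le_iSup f i₀) (iSup_le fun j => le_iSup f _)

end Helpers

section Orth
open Classical
variable {Γ : AddSubgroup ℝ} {Λ : Type*} [Field Λ] {NS : NovikovStructure Γ Λ}
variable {C : Type*} [AddCommGroup C] [Module Λ C] {ℓ : C → EReal}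

lemma orth_comp_inj (hl : IsNonArchNorm NS ℓ) {ι κ : Type*} [Fintype ι] [Fintype κ]
    {z : ι → C} (hz : IsOrthFamily Λ ℓ z) {σ : κ → ι} (hσ : Function.Injective σ) :
    IsOrthFamily Λ ℓ (z ∘ σ) := by
  intro a
  set a' : ι → Λ := Function.extend σ a 0 with ha'
  have hvan : ∀ i ∈ Finset.univ, i ∉ Finset.univ.image σ → a' i • z i = 0 := by
    intro i _ hi
    have : ¬ ∃ j, σ j = i := by
      rintro ⟨j, rfl⟩; exact hi (Finset.mem_image_of_mem σ (Finset.mem_univ j))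
    rw [ha', Function.extend_apply' _ _ _ this]
    simp
  have hsum : ∑ i, a' i • z i = ∑ j, a j • z (σ j) := by
    calc ∑ i, a' i • z i = ∑ i ∈ Finset.univ.image σ, a' i • z i :=
          (Finset.sum_subset (Finset.subset_univ _) hvan).symm
      _ = ∑ j, a' (σ j) • z (σ j) :=
          Finset.sum_image (fun x _ y _ h => hσ h)
      _ = ∑ j, a j • z (σ j) := by
          refine Finset.sum_congr rfl fun j _ => ?_
          rw [ha', hσ.extend_apply]
  have hsup : (⨆ i, ℓ (a' i • z i)) = ⨆ j, ℓ (a j • z (σ j)) := by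
    apply le_antisymm
    · refine iSup_le fun i => ?_
      by_cases h : ∃ j, σ j = i
      · obtain ⟨j, rfl⟩ := h
        rw [ha', hσ.extend_apply]
        exact le_iSup (fun j => ℓ (a j • z (σ j))) j
      · rw [ha', Function.extend_apply' _ _ _ h]
        simp [l_zero hl]
    · refine iSup_le fun j => ?_
      have : a j • z (σ j) = a' (σ j) • z (σ j) := by rw [ha', hσ.extend_apply]
      rw [this]
      exact le_iSup (fun i => ℓ (a' i • z i)) (σ j)
  have := hz a'
  rw [hsum, hsup] at this
  exact this

/-- pairwise orthogonality from family orthogonality -/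
lemma orth_pair (hl : IsNonArchNorm NS ℓ) {ι : Type*} [Fintype ι]
    {z : ι → C} (hz : IsOrthFamily Λ ℓ z) {i j : ι} (hij : i ≠ j) (a b : Λ) :
    ℓ (a • z i + b • z j) = max (ℓ (a • z i)) (ℓ (b • z j)) := by
  classical
  set c : ι → Λ := fun k => if k = i then a else if k = j then b else 0 with hc
  have hci : c i = a := by simp [hc]
  have hcj : c j = b := by simp [hc, hij.symm]
  have hvan : ∀ k ∈ Finset.univ, k ∉ ({i, j} : Finset ι) → c k • z k = 0 := by
    intro k _ hk
    simp only [Finset.mem_insert, Finset.mem_singleton, not_or] at hk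
    simp [hc, hk.1, hk.2]
  have hsum : ∑ k, c k • z k = a • z i + b • z j := by
    calc ∑ k, c k • z k = ∑ k ∈ ({i, j} : Finset ι), c k • z k :=
          (Finset.sum_subset (Finset.subset_univ _) hvan).symm
      _ = c i • z i + c j • z j := Finset.sum_pair hij
      _ = a • z i + b • z j := by rw [hci, hcj]
  have hsup : (⨆ k, ℓ (c k • z k)) = max (ℓ (a • z i)) (ℓ (b • z j)) := by
    apply le_antisymm
    · refine iSup_le fun k => ?_
      by_cases h1 : k = i
      · subst h1; rw [hci]; exact le_max_left _ _
      by_cases h2 : k = j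
      · subst h2; rw [hcj]; exact le_max_right _ _
      · simp [hc, h1, h2, l_zero hl]
    · refine max_le ?_ ?_
      · have := le_iSup (fun k => ℓ (c k • z k)) i
        rwa [hci] at this
      · have := le_iSup (fun k => ℓ (c k • z k)) j
        rwa [hcj] at this
  have := hz c
  rw [hsum, hsup] at this
  exact this

end Orth

section Orth2
open Classical
variable {Γ : AddSubgroup ℝ} {Λ : Type*} [Field Λ] {NS : NovikovStructure Γ Λ}
variable {C : Type*} [AddCommGroup C] [Module Λ C] {ℓ : C → EReal}

lemma basis_split (hl : IsNonArchNorm NS ℓ) {p : ℕ} {wb : Module.Basis (Fin p) Λ C}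
    (hwb : IsOrthFamily Λ ℓ ⇑wb) {α₀ : Fin p} {x : C} (hx : wb.repr x α₀ = 0) (μ : Λ) :
    ℓ (μ • wb α₀ + x) = max (ℓ (μ • wb α₀)) (ℓ x) := by
  set a : Fin p → Λ := fun α => if α = α₀ then μ else wb.repr x α with ha
  have hx' : ℓ x = ⨆ α, ℓ (wb.repr x α • wb α) := by
    have := hwb (fun α => wb.repr x α)
    rwa [wb.sum_repr x] at this
  have hsum : ∑ α, a α • wb α = μ • wb α₀ + x := by
    have key : ∀ α, a α = (if α = α₀ then μ else 0) + wb.repr x α := by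
      intro α
      by_cases h : α = α₀
      · subst h; simp [ha, hx]
      · simp [ha, h]
    calc ∑ α, a α • wb α
        = ∑ α, ((if α = α₀ then μ else 0) • wb α + wb.repr x α • wb α) := by
          refine Finset.sum_congr rfl fun α _ => ?_
          rw [key α, add_smul]
      _ = (∑ α, (if α = α₀ then μ else 0) • wb α) + ∑ α, wb.repr x α • wb α :=
          Finset.sum_add_distrib
      _ = μ • wb α₀ + x := by
          rw [wb.sum_repr x]
          congr 1
          simp [ite_smul]
  have hsup : (⨆ α, ℓ (a α • wb α)) = max (ℓ (μ • wb α₀)) (ℓ x) := by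
    apply le_antisymm
    · refine iSup_le fun α => ?_
      by_cases h : α = α₀
      · subst h; simp only [ha, if_pos rfl]; exact le_max_left _ _
      · refine le_trans ?_ (le_max_right _ _)
        rw [hx']
        simp only [ha, if_neg h]
        exact le_iSup (fun α => ℓ (wb.repr x α • wb α)) α
    · refine max_le ?_ ?_
      · have := le_iSup (fun α => ℓ (a α • wb α)) α₀
        simpa [ha] using this
      · rw [hx']
        refine iSup_le fun α => ?_
        by_cases h : α = α₀
        · subst h; simp [hx, l_zero hl]
        · have he : wb.repr x α • wb α = a α • wb α := by simp [ha, h]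
          rw [he]
          exact le_iSup (fun α => ℓ (a α • wb α)) α
  have := hwb a
  rw [hsum, hsup] at this
  exact this

/-- orthogonality of one member of an orthogonal family against the span of the others -/
lemma orth_span_pair (hl : IsNonArchNorm NS ℓ) {m : ℕ} {z : Fin (m+1) → C}
    (hz : IsOrthFamily Λ ℓ z) (i₀ : Fin (m+1)) (μ : Λ) {w : C}
    (hw : w ∈ Submodule.span Λ (Set.range (z ∘ i₀.succAbove))) :
    ℓ (μ • z i₀ + w) = max (ℓ (μ • z i₀)) (ℓ w) := by
  obtain ⟨b, hb⟩ := (Submodule.mem_span_range_iff_exists_fun Λ).mp hw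
  set a : Fin (m+1) → Λ := i₀.insertNth μ b with ha
  have hsum : ∑ i, a i • z i = μ • z i₀ + w := by
    rw [Fin.sum_univ_succAbove (fun i => a i • z i) i₀]
    simp only [ha, Fin.insertNth_apply_same, Fin.insertNth_apply_succAbove]
    rw [← hb]
    rfl
  have hsub : IsOrthFamily Λ ℓ (z ∘ i₀.succAbove) :=
    orth_comp_inj hl hz Fin.succAbove_right_injective
  have hw' : ℓ w = ⨆ j, ℓ (b j • z (i₀.succAbove j)) := by
    have := hsub b
    rwa [hb] at this
  have hsup : (⨆ i, ℓ (a i • z i)) = max (ℓ (μ • z i₀)) (ℓ w) := by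
    rw [fin_iSup_split (fun i => ℓ (a i • z i)) i₀, hw']
    simp only [ha, Fin.insertNth_apply_same, Fin.insertNth_apply_succAbove]
  have := hz a
  rw [hsum, hsup] at this
  exact this

/-- elementary column operations: subtracting suitable multiples of `u i₀` preserves
orthogonality, filtration levels and span -/
lemma elem_ops (hl : IsNonArchNorm NS ℓ) {m : ℕ} {u : Fin (m+1) → C}
    (hu : IsOrthFamily Λ ℓ u) (i₀ : Fin (m+1)) (lam : Fin (m+1) → Λ)
    (hlam0 : lam i₀ = 0) (hlam : ∀ i, ℓ (lam i • u i₀) ≤ ℓ (u i)) :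
    IsOrthFamily Λ ℓ (fun i => u i - lam i • u i₀) ∧
    (∀ (a : Λ) (i : Fin (m+1)), ℓ (a • (u i - lam i • u i₀)) = ℓ (a • u i)) ∧
    Submodule.span Λ (Set.range (fun i => u i - lam i • u i₀))
      = Submodule.span Λ (Set.range u) := by
  set u1 : Fin (m+1) → C := fun i => u i - lam i • u i₀ with hu1
  have hu1i₀ : u1 i₀ = u i₀ := by simp [hu1, hlam0]
  -- pointwise levels
  have hpt : ∀ (a : Λ) (i : Fin (m+1)), ℓ (a • u1 i) = ℓ (a • u i) := by
    intro a i
    by_cases h : i = i₀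
    · subst h; rw [hu1i₀]
    · have hexp : a • u1 i = a • u i + (-(a * lam i)) • u i₀ := by
        simp [hu1, smul_sub, smul_smul, sub_eq_add_neg]
      have hbound : ℓ ((-(a * lam i)) • u i₀) ≤ ℓ (a • u i) := by
        have h1 : (-(a * lam i)) • u i₀ = -(a • (lam i • u i₀)) := by
          rw [smul_smul, neg_smul]
        rw [h1, l_neg hl, hl.smul_eq a (lam i • u i₀), hl.smul_eq a (u i)]
        exact EReal.sub_le_sub (hlam i) le_rfl
      rw [hexp, orth_pair hl hu h a (-(a * lam i)), max_eq_left hbound]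
  refine ⟨?_, hpt, ?_⟩
  · -- orthogonality
    intro a
    set s : Λ := ∑ i, a i * lam i with hs
    set b : Fin (m+1) → Λ := fun i => if i = i₀ then a i₀ - s else a i with hb
    have hbsum : ∑ i, a i • u1 i = ∑ i, b i • u i := by
      have h1 : ∑ i, a i • u1 i = (∑ i, a i • u i) - s • u i₀ := by
        simp only [hu1, smul_sub, smul_smul]
        rw [Finset.sum_sub_distrib, ← Finset.sum_smul]
      have h2 : ∑ i, b i • u i = (∑ i, a i • u i) - s • u i₀ := by
        have key : ∀ i, b i • u i = a i • u i - (if i = i₀ then s else 0) • u i := by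
          intro i
          by_cases h : i = i₀
          · subst h; simp [hb, sub_smul]
          · simp [hb, h]
        calc ∑ i, b i • u i = ∑ i, (a i • u i - (if i = i₀ then s else 0) • u i) :=
              Finset.sum_congr rfl fun i _ => key i
          _ = (∑ i, a i • u i) - ∑ i, (if i = i₀ then s else 0) • u i :=
              Finset.sum_sub_distrib _ _
          _ = (∑ i, a i • u i) - s • u i₀ := by
              congr 1
              simp [ite_smul]
      rw [h1, h2]
    -- the sups
    set R : EReal := ⨆ j, ℓ (a (i₀.succAbove j) • u (i₀.succAbove j)) with hR
    have hsle : ℓ (s • u i₀) ≤ R := by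
      have h1 : s • u i₀ = ∑ i, (a i * lam i) • u i₀ := by
        rw [hs, Finset.sum_smul]
      rw [h1]
      refine le_trans (l_sum_le hl _) (iSup_le fun i => ?_)
      by_cases h : i = i₀
      · subst h; simp [hlam0, l_zero hl]
      · obtain ⟨j, rfl⟩ := Fin.exists_succAbove_eq h
        have h2 : (a (i₀.succAbove j) * lam (i₀.succAbove j)) • u i₀
            = a (i₀.succAbove j) • (lam (i₀.succAbove j) • u i₀) := by rw [smul_smul]
        rw [h2, hl.smul_eq]
        refine le_trans (EReal.sub_le_sub (hlam _) le_rfl) ?_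
        rw [← hl.smul_eq]
        exact le_iSup (fun j => ℓ (a (i₀.succAbove j) • u (i₀.succAbove j))) j
    have hY : ℓ (b i₀ • u i₀) ≤ max (ℓ (a i₀ • u i₀)) R := by
      have : b i₀ • u i₀ = a i₀ • u i₀ - s • u i₀ := by simp [hb, sub_smul]
      rw [this]
      exact le_trans (l_sub_le hl _ _) (max_le (le_max_left _ _)
        (le_trans hsle (le_max_right _ _)))
    have hX : ℓ (a i₀ • u i₀) ≤ max (ℓ (b i₀ • u i₀)) R := by
      have : a i₀ • u i₀ = b i₀ • u i₀ + s • u i₀ := by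
        simp [hb, sub_smul, sub_add_cancel]
      rw [this]
      exact le_trans (hl.add_le _ _) (max_le (le_max_left _ _)
        (le_trans hsle (le_max_right _ _)))
    have hmax : max (ℓ (b i₀ • u i₀)) R = max (ℓ (a i₀ • u i₀)) R :=
      le_antisymm (max_le hY (le_max_right _ _)) (max_le hX (le_max_right _ _))
    calc ℓ (∑ i, a i • u1 i) = ℓ (∑ i, b i • u i) := by rw [hbsum]
      _ = ⨆ i, ℓ (b i • u i) := hu b
      _ = max (ℓ (b i₀ • u i₀)) (⨆ j, ℓ (b (i₀.succAbove j) • u (i₀.succAbove j))) :=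
          fin_iSup_split _ i₀
      _ = max (ℓ (b i₀ • u i₀)) R := by
          congr 1
          refine iSup_congr fun j => ?_
          rw [show b (i₀.succAbove j) = a (i₀.succAbove j) from
            by simp [hb, Fin.succAbove_ne i₀ j]]
      _ = max (ℓ (a i₀ • u i₀)) R := hmax
      _ = max (ℓ (a i₀ • u1 i₀)) (⨆ j, ℓ (a (i₀.succAbove j) • u1 (i₀.succAbove j))) := by
          rw [hpt (a i₀) i₀]
          congr 1
          exact (iSup_congr fun j => hpt _ _).symm
      _ = ⨆ i, ℓ (a i • u1 i) := (fin_iSup_split (fun i => ℓ (a i • u1 i)) i₀).symm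
  · -- span
    apply le_antisymm
    · rw [Submodule.span_le]
      rintro x ⟨i, rfl⟩
      exact sub_mem (Submodule.subset_span ⟨i, rfl⟩)
        (Submodule.smul_mem _ _ (Submodule.subset_span ⟨i₀, rfl⟩))
    · rw [Submodule.span_le]
      rintro x ⟨i, rfl⟩
      have : u i = u1 i + lam i • u1 i₀ := by
        rw [hu1i₀]; simp [hu1]
      rw [this]
      exact add_mem (Submodule.subset_span ⟨i, rfl⟩)
        (Submodule.smul_mem _ _ (Submodule.subset_span ⟨i₀, rfl⟩))

end Orth2

lemma ereal_exists_real {x : EReal} (h1 : x ≠ ⊥) (h2 : x ≠ ⊤) : ∃ r : ℝ, x = (r : EReal) := by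
  induction x using EReal.rec with
  | bot => exact absurd rfl h1
  | coe r => exact ⟨r, rfl⟩
  | top => exact absurd rfl h2

lemma ereal_cancel_sub {x y : EReal} (t : ℝ) (h : x - t ≤ y - t) : x ≤ y := by
  have h2 := add_le_add_left h (t : EReal)
  rwa [EReal.sub_add_cancel, EReal.sub_add_cancel] at h2

lemma l_real {Γ : AddSubgroup ℝ} {Λ : Type*} [Field Λ] {NS : NovikovStructure Γ Λ}
    {C : Type*} [AddCommGroup C] [Module Λ C] {ℓ : C → EReal}
    (hl : IsNonArchNorm NS ℓ) {x : C} (hx : x ≠ 0) : ∃ r : ℝ, ℓ x = (r : EReal) :=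
  ereal_exists_real (fun h => hx ((hl.eq_bot_iff x).mp h)) (hl.ne_top x)

section MainLemma
open Classical

set_option maxHeartbeats 1000000 in
lemma svd_main {Γ : AddSubgroup ℝ} {Λ : Type*} [Field Λ] (NS : NovikovStructure Γ Λ)
    {C D : Type*} [AddCommGroup C] [Module Λ C] [AddCommGroup D] [Module Λ D]
    {ℓC : C → EReal} {ℓD : D → EReal}
    (hC : IsNonArchNorm NS ℓC) (hDn : IsNonArchNorm NS ℓD)
    {p : ℕ} (wb : Module.Basis (Fin p) Λ D) (hwb : IsOrthFamily Λ ℓD ⇑wb)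
    (A : C →ₗ[Λ] D) :
    ∀ (m : ℕ) (u : Fin m → C), IsOrthFamily Λ ℓC u → (∀ i, u i ≠ 0) →
    ∃ u' : Fin m → C,
      IsOrthFamily Λ ℓC u' ∧
      Submodule.span Λ (Set.range u') = Submodule.span Λ (Set.range u) ∧
      (∀ i, ℓC (u' i) = ℓC (u i)) ∧
      (∀ i, ℓD (A (u' i)) ≤ ℓD (A (u i))) ∧
      IsOrthFamily Λ ℓD (fun i => A (u' i)) := by
  intro m
  induction m with
  | zero =>
      intro u hu hne
      exact ⟨u, hu, rfl, fun i => rfl, fun i => le_rfl,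
        fun a => by simp [l_zero hDn]⟩
  | succ m IH =>
      intro u hu hne
      by_cases hA : ∀ i, A (u i) = 0
      · refine ⟨u, hu, rfl, fun i => rfl, fun i => le_rfl, fun a => ?_⟩
        simp [hA, l_zero hDn]
      · push_neg at hA
        obtain ⟨iw, hiw⟩ := hA
        -- coefficients of the images in the orthogonal basis of D
        set c : Fin (m+1) → Fin p → Λ := fun i α => wb.repr (A (u i)) α with hcdef
        have hrepr_sum : ∀ i, ∑ α, c i α • wb α = A (u i) := fun i => wb.sum_repr _
        have himg_sup : ∀ i, ℓD (A (u i)) = ⨆ α, ℓD (c i α • wb α) := by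
          intro i
          have := hwb (c i)
          rwa [hrepr_sum i] at this
        -- a nonzero entry exists
        have hex : ∃ α, c iw α ≠ 0 := by
          by_contra h
          push_neg at h
          apply hiw
          rw [← hrepr_sum iw]
          simp [h]
        obtain ⟨αw, hαw⟩ := hex
        -- choose the pivot
        haveI : Nonempty (Fin (m+1) × Fin p) := ⟨⟨iw, αw⟩⟩
        obtain ⟨⟨i₀, α₀⟩, hmax⟩ :=
          Finite.exists_max (fun q : Fin (m+1) × Fin p =>
            ℓD (c q.1 q.2 • wb q.2) - ℓC (u q.1))
        -- real values
        obtain ⟨rw', hrw⟩ := l_real hC (hne iw)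
        obtain ⟨Ww, hWw⟩ := l_real hDn (wb.ne_zero αw)
        obtain ⟨gw, hgw⟩ := nu_real hαw
        have hc00 : c i₀ α₀ ≠ 0 := by
          intro h0
          have h1 := hmax ⟨iw, αw⟩
          simp only at h1
          rw [h0, zero_smul, l_zero hDn] at h1
          rw [hDn.smul_eq, hWw, hgw, hrw] at h1
          rw [sub_eq_add_neg (⊥ : EReal), EReal.bot_add] at h1
          have : ((Ww : EReal) - (gw : EReal)) - (rw' : EReal)
              = (((Ww - gw) - rw' : ℝ) : EReal) := by norm_cast
          rw [this] at h1
          exact (EReal.coe_ne_bot _) (le_bot_iff.mp h1)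
        obtain ⟨W0, hW0⟩ := l_real hDn (wb.ne_zero α₀)
        obtain ⟨g0, hg0⟩ := nu_real hc00
        obtain ⟨r0, hr0⟩ := l_real hC (hne i₀)
        have hpiv : ℓD (c i₀ α₀ • wb α₀) = ((W0 - g0 : ℝ) : EReal) := by
          rw [hDn.smul_eq, hW0, hg0]; norm_cast
        have hginv : NS.ν (c i₀ α₀)⁻¹ = ((-g0 : ℝ) : EReal) := by
          have h := nu_add_inv (NS := NS) hc00
          obtain ⟨t, ht⟩ := nu_real (inv_ne_zero hc00)
          rw [hg0, ht, ← EReal.coe_add] at h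
          have : g0 + t = 0 := by exact_mod_cast h
          rw [ht]
          norm_cast
          linarith
        -- the coefficients for the elementary operations
        set lam : Fin (m+1) → Λ :=
          fun i => if i = i₀ then 0 else c i α₀ * (c i₀ α₀)⁻¹ with hlamdef
        have hlam0 : lam i₀ = 0 := if_pos rfl
        have hnulam : ∀ i, i ≠ i₀ → c i α₀ ≠ 0 →
            ∃ gi : ℝ, NS.ν (c i α₀) = (gi : EReal) ∧
              NS.ν (lam i) = ((gi - g0 : ℝ) : EReal) := by
          intro i hi hci
          obtain ⟨gi, hgi⟩ := nu_real hci
          refine ⟨gi, hgi, ?_⟩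
          rw [hlamdef]
          simp only [if_neg hi]
          rw [NS.ν_mul, hgi, hginv]
          norm_cast
        -- Fact A : the elementary operations do not raise ℓC
        have hA1 : ∀ i, ℓC (lam i • u i₀) ≤ ℓC (u i) := by
          intro i
          by_cases hi : i = i₀
          · subst hi; rw [hlam0, zero_smul, l_zero hC]; exact bot_le
          by_cases hci : c i α₀ = 0
          · rw [hlamdef]; simp only [if_neg hi, hci, zero_mul, zero_smul, l_zero hC]
            exact bot_le
          obtain ⟨gi, hgi, hnl⟩ := hnulam i hi hci
          obtain ⟨ri, hri⟩ := l_real hC (hne i)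
          have h1 := hmax ⟨i, α₀⟩
          simp only at h1
          rw [hDn.smul_eq, hDn.smul_eq, hW0, hg0, hgi, hri, hr0] at h1
          have h1' : (((W0 - gi) - ri : ℝ) : EReal) ≤ (((W0 - g0) - r0 : ℝ) : EReal) := by
            convert h1 using 2 <;> norm_cast
          have h1'' : (W0 - gi) - ri ≤ (W0 - g0) - r0 := EReal.coe_le_coe_iff.mp h1'
          rw [hC.smul_eq, hnl, hr0, hri]
          have : (r0 : EReal) - ((gi - g0 : ℝ) : EReal) = ((r0 - (gi - g0) : ℝ) : EReal) := by
            norm_cast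
          rw [this]
          exact EReal.coe_le_coe_iff.mpr (by linarith)
        -- the pivot dominates its row
        have hrow : ∀ α, ℓD (c i₀ α • wb α) ≤ ℓD (c i₀ α₀ • wb α₀) := by
          intro α
          have h1 := hmax ⟨i₀, α⟩
          simp only at h1
          rw [hr0] at h1
          exact ereal_cancel_sub r0 h1
        -- the remainder r and fact K1
        set rr : D := A (u i₀) - c i₀ α₀ • wb α₀ with hrrdef
        have hrrepr : ∀ α, wb.repr rr α = if α = α₀ then 0 else c i₀ α := by
          intro α
          rw [hrrdef, map_sub, map_smul, Finsupp.sub_apply, Finsupp.smul_apply,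
            Module.Basis.repr_self, smul_eq_mul, Finsupp.single_apply]
          by_cases h : α = α₀
          · subst h
            rw [if_pos rfl, if_pos rfl, mul_one]
            exact sub_self _
          · rw [if_neg h, if_neg fun hh => h hh.symm, mul_zero, sub_zero]
        have hrle : ℓD rr ≤ ℓD (c i₀ α₀ • wb α₀) := by
          have hsup : ℓD rr = ⨆ α, ℓD (wb.repr rr α • wb α) := by
            have := hwb (fun α => wb.repr rr α)
            rwa [wb.sum_repr rr] at this
          rw [hsup]
          refine iSup_le fun α => ?_
          rw [hrrepr α]
          by_cases h : α = α₀
          · simp [h, l_zero hDn]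
          · rw [if_neg h]; exact hrow α
        have hK1 : ℓD (A (u i₀)) = ℓD (c i₀ α₀ • wb α₀) := by
          have hdec : A (u i₀) = c i₀ α₀ • wb α₀ + rr := by rw [hrrdef]; abel
          have hr0' : wb.repr rr α₀ = 0 := by rw [hrrepr α₀]; simp
          rw [hdec, basis_split hDn hwb hr0' (c i₀ α₀)]
          exact max_eq_left hrle
        -- each coordinate is dominated by the image level
        have hcoordle : ∀ i α, ℓD (c i α • wb α) ≤ ℓD (A (u i)) := by
          intro i α
          rw [himg_sup i]
          exact le_iSup (fun α => ℓD (c i α • wb α)) α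
        -- Fact B : images do not rise
        have hB : ∀ i, ℓD (A (u i) - lam i • A (u i₀)) ≤ ℓD (A (u i)) := by
          intro i
          by_cases hi : i = i₀
          · subst hi; rw [hlam0, zero_smul, sub_zero]
          by_cases hci : c i α₀ = 0
          · rw [hlamdef]; simp only [if_neg hi, hci, zero_mul, zero_smul, sub_zero]
            exact le_rfl
          obtain ⟨gi, hgi, hnl⟩ := hnulam i hi hci
          have hb2 : ℓD (lam i • A (u i₀)) ≤ ℓD (A (u i)) := by
            rw [hDn.smul_eq, hK1, hpiv, hnl]
            refine le_trans ?_ (hcoordle i α₀)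
            rw [hDn.smul_eq, hW0, hgi]
            have e1 : (((W0 - g0 : ℝ)) : EReal) - (((gi - g0 : ℝ)) : EReal)
                = ((W0 - gi : ℝ) : EReal) := by norm_cast; ring
            have e2 : (W0 : EReal) - (gi : EReal) = ((W0 - gi : ℝ) : EReal) := by norm_cast
            rw [e1, e2]
          exact le_trans (l_sub_le hDn _ _) (max_le le_rfl hb2)
        -- Fact C : orthogonality of A (u i₀) against vectors without α₀-component
        have hc : ∀ (μ : Λ) (w : D), wb.repr w α₀ = 0 →
            ℓD (μ • A (u i₀) + w) = max (ℓD (μ • A (u i₀))) (ℓD w) := by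
          intro μ w hw
          have hr0' : wb.repr rr α₀ = 0 := by rw [hrrepr α₀]; simp
          have hdecomp : μ • A (u i₀) + w = (μ * c i₀ α₀) • wb α₀ + (μ • rr + w) := by
            rw [hrrdef, mul_smul]
            rw [smul_sub]
            abel
          have hw2 : wb.repr (μ • rr + w) α₀ = 0 := by
            rw [map_add, map_smul, Finsupp.add_apply, Finsupp.smul_apply, hr0', hw]
            simp
          have hsplit := basis_split hDn hwb hw2 (μ * c i₀ α₀)
          have hP : ℓD ((μ * c i₀ α₀) • wb α₀) = ℓD (μ • A (u i₀)) := by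
            rw [mul_smul, hDn.smul_eq μ (c i₀ α₀ • wb α₀), ← hK1, ← hDn.smul_eq]
          have hμr : ℓD (μ • rr) ≤ ℓD (μ • A (u i₀)) := by
            rw [hDn.smul_eq, hDn.smul_eq]
            exact EReal.sub_le_sub (le_trans hrle (le_of_eq hK1.symm)) le_rfl
          rcases le_or_gt (ℓD w) (ℓD (μ • A (u i₀))) with hcase | hcase
          · rw [max_eq_left hcase, hdecomp, hsplit, hP]
            exact max_eq_left (le_trans (hDn.add_le _ _) (max_le hμr hcase))
          · have hw' : ℓD (μ • rr + w) = ℓD w := by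
              apply le_antisymm
                (le_trans (hDn.add_le _ _) (max_le (le_trans hμr hcase.le) le_rfl))
              have hweq : w = (μ • rr + w) - μ • rr := by abel
              have hle2 : ℓD w ≤ max (ℓD (μ • rr + w)) (ℓD (μ • rr)) := by
                conv_lhs => rw [hweq]
                exact l_sub_le hDn _ _
              rcases le_max_iff.mp hle2 with h | h
              · exact h
              · exact absurd (lt_of_le_of_lt (le_trans h hμr) hcase) (lt_irrefl _)
            rw [max_eq_right hcase.le, hdecomp, hsplit, hP, hw']
            exact max_eq_right hcase.le
        -- Fact D : the new images have no α₀-component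
        have hD1 : ∀ i, i ≠ i₀ → wb.repr (A (u i) - lam i • A (u i₀)) α₀ = 0 := by
          intro i hi
          rw [map_sub, map_smul, Finsupp.sub_apply, Finsupp.smul_apply]
          have h1 : wb.repr (A (u i)) α₀ = c i α₀ := rfl
          have h2 : wb.repr (A (u i₀)) α₀ = c i₀ α₀ := rfl
          rw [h1, h2, hlamdef]
          simp only [if_neg hi, smul_eq_mul]
          field_simp
          ring
        -- apply the elementary operations
        obtain ⟨horth1, hpt1, hspan1⟩ := elem_ops hC hu i₀ lam hlam0 hA1
        set u1 : Fin (m+1) → C := fun i => u i - lam i • u i₀ with hu1def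
        have hu1i₀ : u1 i₀ = u i₀ := by rw [hu1def]; simp [hlam0]
        have hl1 : ∀ i, ℓC (u1 i) = ℓC (u i) := by
          intro i
          have := hpt1 1 i
          rwa [one_smul, one_smul] at this
        have hAu1 : ∀ i, A (u1 i) = A (u i) - lam i • A (u i₀) := by
          intro i
          rw [hu1def]
          simp [map_sub, map_smul]
        have hu1ne : ∀ i, u1 i ≠ 0 := by
          intro i h0
          apply hne i
          rw [← hC.eq_bot_iff, ← hl1 i, h0, l_zero hC]
        -- apply the induction hypothesis to the other columns
        set σ : Fin m → Fin (m+1) := i₀.succAbove with hσdef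
        have hσinj : Function.Injective σ := Fin.succAbove_right_injective
        obtain ⟨u2, h2orth, h2span, h2lev, h2le, h2img⟩ :=
          IH (u1 ∘ σ) (orth_comp_inj hC horth1 hσinj) (fun j => hu1ne (σ j))
        -- the new images still have no α₀-component
        have hAu1W : ∀ j, wb.repr (A (u1 (σ j))) α₀ = 0 := by
          intro j
          rw [hAu1]
          exact hD1 (σ j) (Fin.succAbove_ne i₀ j)
        have hu2mem : ∀ j, u2 j ∈ Submodule.span Λ (Set.range (u1 ∘ σ)) := by
          intro j
          rw [← h2span]
          exact Submodule.subset_span ⟨j, rfl⟩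
        have hU2W : ∀ j, wb.repr (A (u2 j)) α₀ = 0 := by
          intro j
          obtain ⟨b, hb⟩ := (Submodule.mem_span_range_iff_exists_fun Λ).mp (hu2mem j)
          rw [← hb, map_sum, map_sum, Finsupp.coe_finset_sum, Finset.sum_apply]
          refine Finset.sum_eq_zero fun k _ => ?_
          have h0 : wb.repr (A ((u1 ∘ σ) k)) α₀ = 0 := hAu1W k
          rw [map_smul, map_smul, Finsupp.smul_apply, h0, smul_zero]
        -- the final family
        set u' : Fin (m+1) → C := i₀.insertNth (u i₀) u2 with hu'def
        have hu'i₀ : u' i₀ = u i₀ := Fin.insertNth_apply_same i₀ _ _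
        have hu'σ : ∀ j, u' (σ j) = u2 j := fun j => Fin.insertNth_apply_succAbove i₀ _ _ j
        refine ⟨u', ?_, ?_, ?_, ?_, ?_⟩
        · -- orthogonality of u'
          intro a
          have hwmem : (∑ j, a (i₀.succAbove j) • u2 j)
              ∈ Submodule.span Λ (Set.range (u1 ∘ i₀.succAbove)) :=
            Submodule.sum_mem _ fun j _ => Submodule.smul_mem _ _ (hu2mem j)
          have hsum : ∑ i, a i • u' i = a i₀ • u1 i₀ + ∑ j, a (i₀.succAbove j) • u2 j := by
            rw [Fin.sum_univ_succAbove (fun i => a i • u' i) i₀]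
            simp only [hu'i₀, (show ∀ j, u' (i₀.succAbove j) = u2 j from hu'σ), hu1i₀]
          have hw' := h2orth (fun j => a (i₀.succAbove j))
          rw [hsum, orth_span_pair hC horth1 i₀ (a i₀) hwmem, hw',
            fin_iSup_split (fun i => ℓC (a i • u' i)) i₀]
          simp only [hu'i₀, (show ∀ j, u' (i₀.succAbove j) = u2 j from hu'σ), hu1i₀]
        · -- span
          have hsub1 : Submodule.span Λ (Set.range (u1 ∘ i₀.succAbove))
              ≤ Submodule.span Λ (Set.range u1) :=
            Submodule.span_mono (Set.range_comp_subset_range _ _)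
          apply le_antisymm
          · rw [Submodule.span_le]
            rintro x ⟨i, rfl⟩
            by_cases h : i = i₀
            · rw [h, hu'i₀]; exact Submodule.subset_span ⟨i₀, rfl⟩
            · obtain ⟨j, rfl⟩ := Fin.exists_succAbove_eq h
              rw [hu'σ j, ← hspan1]
              exact hsub1 (hu2mem j)
          · rw [← hspan1, Submodule.span_le]
            rintro x ⟨i, rfl⟩
            by_cases h : i = i₀
            · rw [h, hu1i₀, ← hu'i₀]
              exact Submodule.subset_span ⟨i₀, rfl⟩
            · obtain ⟨j, rfl⟩ := Fin.exists_succAbove_eq h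
              have hmem2 : u1 (i₀.succAbove j) ∈ Submodule.span Λ (Set.range u2) := by
                rw [h2span]; exact Submodule.subset_span ⟨j, rfl⟩
              refine Submodule.span_mono ?_ hmem2
              rintro y ⟨k, rfl⟩
              exact ⟨i₀.succAbove k, hu'σ k⟩
        · -- levels in C
          intro i
          by_cases h : i = i₀
          · subst h; rw [hu'i₀]
          · obtain ⟨j, rfl⟩ := Fin.exists_succAbove_eq h
            rw [hu'σ j]
            exact (h2lev j).trans (hl1 _)
        · -- levels in D
          intro i
          by_cases h : i = i₀
          · subst h; rw [hu'i₀]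
          · obtain ⟨j, rfl⟩ := Fin.exists_succAbove_eq h
            rw [hu'σ j]
            refine le_trans (h2le j) ?_
            have hb := hB (i₀.succAbove j)
            rw [← hAu1] at hb
            exact hb
        · -- orthogonality of the images
          intro a
          have hwrepr : wb.repr (∑ j, a (i₀.succAbove j) • A (u2 j)) α₀ = 0 := by
            rw [map_sum, Finsupp.coe_finset_sum, Finset.sum_apply]
            refine Finset.sum_eq_zero fun j _ => ?_
            rw [map_smul, Finsupp.smul_apply, hU2W j]
            simp
          have hsum : ∑ i, a i • A (u' i)
              = a i₀ • A (u i₀) + ∑ j, a (i₀.succAbove j) • A (u2 j) := by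
            rw [Fin.sum_univ_succAbove (fun i => a i • A (u' i)) i₀]
            simp only [hu'i₀, (show ∀ j, u' (i₀.succAbove j) = u2 j from hu'σ)]
          have hw' := h2img (fun j => a (i₀.succAbove j))
          rw [hsum, hc (a i₀) _ hwrepr, hw',
            fin_iSup_split (fun i => ℓD (a i • A (u' i))) i₀]
          simp only [hu'i₀, (show ∀ j, u' (i₀.succAbove j) = u2 j from hu'σ)]

end MainLemma

section
open Classical

/-- Theorem 3.5, algorithmic version of the SVD theorem: given orthogonal
bases as input, one can modify the basis of the domain so that its image family under `A`
is orthogonal, without changing filtration levels in the domain and without increasing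
them in the codomain. -/
theorem algorithmic_svd
    {Γ : AddSubgroup ℝ} {Λ : Type*} [Field Λ] (NS : NovikovStructure Γ Λ)
    {C D : Type*} [AddCommGroup C] [Module Λ C] [AddCommGroup D] [Module Λ D]
    {ℓC : C → EReal} {ℓD : D → EReal}
    (hC : IsOrthogonalizable NS ℓC) (hD : IsOrthogonalizable NS ℓD)
    (A : C →ₗ[Λ] D) {n : ℕ} (v : Module.Basis (Fin n) Λ C) (hv : IsOrthFamily Λ ℓC ⇑v) :
    ∃ v' : Module.Basis (Fin n) Λ C,
      IsOrthFamily Λ ℓC ⇑v' ∧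
      (∀ i : Fin n, ℓC (v' i) = ℓC (v i)) ∧
      (∀ i : Fin n, ℓD (A (v' i)) ≤ ℓD (A (v i))) ∧
      IsOrthFamily Λ ℓD (fun i : {i : Fin n // A (v' i) ≠ 0} => A (v' (i : Fin n))) ∧
      LinearMap.ker A = Submodule.span Λ (⇑v' '' {i : Fin n | A (v' i) = 0}) := by
  obtain ⟨hCn, -⟩ := hC
  obtain ⟨hDn, p, wb, hwb⟩ := hD
  have hne : ∀ i, (⇑v) i ≠ 0 := fun i => v.ne_zero i
  obtain ⟨u', h1orth, h1span, h1lev, h1le, h1img⟩ :=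
    svd_main NS hCn hDn wb hwb A n ⇑v hv hne
  have hu'ne : ∀ i, u' i ≠ 0 := by
    intro i h0
    apply hne i
    rw [← hCn.eq_bot_iff, ← h1lev i, h0, l_zero hCn]
  have li : LinearIndependent Λ u' := by
    rw [Fintype.linearIndependent_iff]
    intro g hg i
    have h := h1orth g
    rw [hg, l_zero hCn] at h
    have hle : ℓC (g i • u' i) ≤ ⊥ := by
      rw [h]
      exact le_iSup (fun i => ℓC (g i • u' i)) i
    have h0 : g i • u' i = 0 := (hCn.eq_bot_iff _).mp (le_bot_iff.mp hle)
    rcases smul_eq_zero.mp h0 with h' | h'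
    · exact h'
    · exact absurd h' (hu'ne i)
  have hsp : Submodule.span Λ (Set.range u') = ⊤ := by
    rw [h1span, Module.Basis.span_eq]
  let v' : Module.Basis (Fin n) Λ C := Module.Basis.mk li (by rw [hsp])
  have hcoe : ⇑v' = u' := Module.Basis.coe_mk li _
  have hv'img : IsOrthFamily Λ ℓD (fun i => A (v' i)) := by
    rw [show (fun i => A (v' i)) = fun i => A (u' i) from by rw [hcoe]]
    exact h1img
  refine ⟨v', ?_, ?_, ?_, ?_, ?_⟩
  · rw [hcoe]; exact h1orth
  · intro i
    have : v' i = u' i := by rw [hcoe]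
    rw [this]; exact h1lev i
  · intro i
    have : v' i = u' i := by rw [hcoe]
    rw [this]; exact h1le i
  · exact orth_comp_inj hDn hv'img Subtype.val_injective
  · apply le_antisymm
    · intro x hx
      have hxk : A x = 0 := LinearMap.mem_ker.mp hx
      have hxsum : ∑ i, v'.repr x i • v' i = x := v'.sum_repr x
      have himg : ∑ i, v'.repr x i • A (v' i) = 0 := by
        rw [show ∑ i, v'.repr x i • A (v' i) = A (∑ i, v'.repr x i • v' i) from by
          rw [map_sum]
          exact Finset.sum_congr rfl fun i _ => (map_smul A _ _).symm]
        rw [hxsum, hxk]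
      have hbot : (⨆ i, ℓD (v'.repr x i • A (v' i))) = ⊥ := by
        rw [← hv'img (fun i => v'.repr x i), himg, l_zero hDn]
      have hzero : ∀ i, v'.repr x i • A (v' i) = 0 := by
        intro i
        have hle : ℓD (v'.repr x i • A (v' i)) ≤ ⊥ := by
          rw [← hbot]
          exact le_iSup (fun i => ℓD (v'.repr x i • A (v' i))) i
        exact (hDn.eq_bot_iff _).mp (le_bot_iff.mp hle)
      rw [← hxsum]
      refine Submodule.sum_mem _ fun i _ => ?_
      by_cases h : A (v' i) = 0
      · exact Submodule.smul_mem _ _ (Submodule.subset_span ⟨i, h, rfl⟩)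
      · rcases smul_eq_zero.mp (hzero i) with h' | h'
        · rw [h', zero_smul]; exact Submodule.zero_mem _
        · exact absurd h' h
    · rw [Submodule.span_le]
      rintro y ⟨i, hi, rfl⟩
      exact LinearMap.mem_ker.mpr hi


end
end
end

section
/- Let (C_1 →∂ C_0) be a two-term Floer-type complex over Λ with singular value decomposition ((y_1, …, y_n), (x_1, …, x_m)) for ∂, and let r = rank ∂. If x = Σ_{i=1}^{r} λ_i x_i is any element of Im ∂ (λ_i ∈ Λ) and y ∈ C_1 satisfies ∂y = x, then ℓ(y) ≥ ℓ(Σ_{i=1}^{r} λ_i y_i) = max{ℓ(y_i) − ν(λ_i) : 1 ≤ i ≤ r}. -/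
/-!
Formalization setup following Usher–Zhang, "Persistent homology and Floer–Novikov theory".

We fix an additive subgroup `Γ ≤ ℝ` and abstract the Novikov field `Λ = Λ^{K,Γ}` as a field
`Λ` equipped with a valuation `ν : Λ → ℝ ∪ {∞}` (encoded in `EReal`, with `ν x = ⊤ ↔ x = 0`)
satisfying (V1),(V2),(V3), whose values on nonzero elements lie in (and fill out) `Γ`.

Filtration functions `ℓ : C → ℝ ∪ {-∞}` are encoded as `EReal`-valued functions which never
take the value `⊤`, with `ℓ x = ⊥ ↔ x = 0`.
-/

noncomputable section

/-- A singular value decomposition (Definition 3.1) of a linear map `A : C → D` between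
orthogonalizable `Λ`-spaces: orthogonal ordered bases `(y₁,…,yₙ)` of `C` and `(x₁,…,xₘ)`
of `D` such that `(y_{r+1},…,yₙ)` is an orthogonal ordered basis of `ker A`,
`(x₁,…,x_r)` is an orthogonal ordered basis of `Im A`, `A yᵢ = xᵢ` for `i ≤ r`, and
`ℓ_C(y₁) - ℓ_D(x₁) ≥ … ≥ ℓ_C(y_r) - ℓ_D(x_r)`; here `r` is the rank of `A`. -/
def IsSVD {Λ : Type*} [Field Λ] {C D : Type*} [AddCommGroup C] [Module Λ C]
    [AddCommGroup D] [Module Λ D] (ℓC : C → EReal) (ℓD : D → EReal) (A : C →ₗ[Λ] D)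
    {r n m : ℕ} (hrn : r ≤ n) (hrm : r ≤ m)
    (y : Module.Basis (Fin n) Λ C) (x : Module.Basis (Fin m) Λ D) : Prop :=
  IsOrthFamily Λ ℓC ⇑y ∧
  IsOrthFamily Λ ℓD ⇑x ∧
  (∀ i : Fin r, A (y (Fin.castLE hrn i)) = x (Fin.castLE hrm i)) ∧
  (∀ i : Fin n, r ≤ (i : ℕ) → A (y i) = 0) ∧
  LinearMap.ker A = Submodule.span Λ (⇑y '' {i : Fin n | r ≤ (i : ℕ)}) ∧
  LinearMap.range A = Submodule.span Λ (⇑x '' {i : Fin m | (i : ℕ) < r}) ∧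
  (∀ i j : Fin r, i ≤ j →
    ℓC (y (Fin.castLE hrn j)) - ℓD (x (Fin.castLE hrm j)) ≤
      ℓC (y (Fin.castLE hrn i)) - ℓD (x (Fin.castLE hrm i)))

/-- Lemma 4.7: in a two-term Floer-type complex `(C₁ → C₀)` with singular
value decomposition `((y₁,…,yₙ), (x₁,…,xₘ))` of `∂` of rank `r`, if `∂ y = ∑_{i≤r} λᵢ xᵢ`
then `ℓ(y) ≥ ℓ(∑_{i≤r} λᵢ yᵢ) = max {ℓ(yᵢ) - ν(λᵢ)}`. -/
theorem svd_minimal_preimage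
    {Γ : AddSubgroup ℝ} {Λ : Type*} [Field Λ] (NS : NovikovStructure Γ Λ)
    {C1 C0 : Type*} [AddCommGroup C1] [Module Λ C1] [AddCommGroup C0] [Module Λ C0]
    {ℓ1 : C1 → EReal} {ℓ0 : C0 → EReal}
    (h1 : IsOrthogonalizable NS ℓ1) (h0 : IsOrthogonalizable NS ℓ0)
    (bd : C1 →ₗ[Λ] C0) (hbd : ∀ z : C1, ℓ0 (bd z) ≤ ℓ1 z)
    {r n m : ℕ} (hrn : r ≤ n) (hrm : r ≤ m)
    (y : Module.Basis (Fin n) Λ C1) (x : Module.Basis (Fin m) Λ C0)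
    (hsvd : IsSVD ℓ1 ℓ0 bd hrn hrm y x)
    (c : Fin r → Λ) (z : C1)
    (hz : bd z = ∑ i : Fin r, c i • x (Fin.castLE hrm i)) :
    ℓ1 (∑ i : Fin r, c i • y (Fin.castLE hrn i)) ≤ ℓ1 z ∧
    ℓ1 (∑ i : Fin r, c i • y (Fin.castLE hrn i)) =
      ⨆ i : Fin r, (ℓ1 (y (Fin.castLE hrn i)) - NS.ν (c i)) := by
  obtain ⟨hN1, -⟩ := h1
  obtain ⟨horthY, horthX, hAx, hAker, hker, hrange, hmono⟩ := hsvd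
  set w := ∑ i : Fin r, c i • y (Fin.castLE hrn i) with hw
  -- bd w = bd z
  have hbdw : bd w = ∑ i : Fin r, c i • x (Fin.castLE hrm i) := by
    rw [hw, map_sum]
    exact Finset.sum_congr rfl fun i _ => by rw [map_smul, hAx]
  have hk : z - w ∈ LinearMap.ker bd := by
    simp [LinearMap.mem_ker, map_sub, hz, hbdw]
  rw [hker] at hk
  have hrepr : ∀ i : Fin n, (i : ℕ) < r → y.repr (z - w) i = 0 := by
    intro i hi
    by_contra h
    have hmem : i ∈ (y.repr (z - w)).support := Finsupp.mem_support_iff.mpr h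
    have := (Module.Basis.mem_span_image y).mp hk hmem
    simp only [Set.mem_setOf_eq] at this
    omega
  -- coefficients of w as a function on Fin n
  let a : Fin n → Λ := fun i => if h : (i : ℕ) < r then c ⟨i, h⟩ else 0
  let b : Fin n → Λ := fun i => y.repr (z - w) i
  have hb0 : ∀ i : Fin n, (i : ℕ) < r → b i = 0 := hrepr
  have ha0 : ∀ i : Fin n, ¬ (i : ℕ) < r → a i = 0 := fun i hi => dif_neg hi
  have hacast : ∀ i : Fin r, a (Fin.castLE hrn i) = c i := by
    intro i
    have h : ((Fin.castLE hrn i : Fin n) : ℕ) < r := i.2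
    show dite _ _ _ = _
    rw [dif_pos h]
    exact congrArg c (Fin.ext rfl)
  -- w = ∑ over Fin n of a i • y i
  have hwa : w = ∑ i : Fin n, a i • y i := by
    rw [hw]
    rw [← Finset.sum_subset (Finset.subset_univ
      (Finset.univ.map (Fin.castLEEmb hrn)))
      (fun i _ hi => by
        have : ¬ (i : ℕ) < r := by
          intro hlt
          exact hi (Finset.mem_map.mpr ⟨⟨(i : ℕ), hlt⟩, Finset.mem_univ _, Fin.ext rfl⟩)
        rw [ha0 i this, zero_smul])]
    rw [Finset.sum_map]
    exact Finset.sum_congr rfl fun i _ => by rw [Fin.castLEEmb_apply, hacast]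
  -- z = ∑ (a i + b i) • y i
  have hzw : z = ∑ i : Fin n, (a i + b i) • y i := by
    have h1' : z - w = ∑ i : Fin n, b i • y i := by
      conv_lhs => rw [← Module.Basis.sum_repr y (z - w)]
    have e : ∑ i : Fin n, (a i + b i) • y i
        = (∑ i : Fin n, a i • y i) + ∑ i : Fin n, b i • y i := by
      rw [← Finset.sum_add_distrib]
      exact Finset.sum_congr rfl fun i _ => add_smul _ _ _
    rw [e, ← hwa, ← h1']
    abel
  -- ℓ of w: sup over Fin r
  have hsupw : ℓ1 w = ⨆ i : Fin r, ℓ1 (c i • y (Fin.castLE hrn i)) := by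
    rw [hwa, horthY a]
    apply le_antisymm
    · apply iSup_le
      intro i
      by_cases h : (i : ℕ) < r
      · have hi : Fin.castLE hrn (⟨(i : ℕ), h⟩ : Fin r) = i := Fin.ext rfl
        have hai : a i = c ⟨(i : ℕ), h⟩ := by
          show dite _ _ _ = _
          rw [dif_pos h]
        calc ℓ1 (a i • y i) = ℓ1 (c ⟨(i : ℕ), h⟩ • y (Fin.castLE hrn ⟨(i : ℕ), h⟩)) := by
              rw [hai, hi]
          _ ≤ _ := le_iSup (fun j : Fin r => ℓ1 (c j • y (Fin.castLE hrn j))) ⟨(i : ℕ), h⟩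
      · rw [ha0 i h, zero_smul, (hN1.eq_bot_iff 0).mpr rfl]
        exact bot_le
    · apply iSup_le
      intro i
      calc ℓ1 (c i • y (Fin.castLE hrn i))
          = ℓ1 (a (Fin.castLE hrn i) • y (Fin.castLE hrn i)) := by rw [hacast]
        _ ≤ _ := le_iSup (fun j : Fin n => ℓ1 (a j • y j)) (Fin.castLE hrn i)
  constructor
  · -- ℓ1 w ≤ ℓ1 z
    have hz' : ℓ1 z = ⨆ i : Fin n, ℓ1 ((a i + b i) • y i) := by
      conv_lhs => rw [hzw]
      exact horthY _
    rw [hsupw, hz']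
    apply iSup_le
    intro i
    have hab : a (Fin.castLE hrn i) + b (Fin.castLE hrn i) = c i := by
      rw [hacast, hb0 _ i.2, add_zero]
    calc ℓ1 (c i • y (Fin.castLE hrn i))
        = ℓ1 ((a (Fin.castLE hrn i) + b (Fin.castLE hrn i)) • y (Fin.castLE hrn i)) := by
          rw [hab]
      _ ≤ _ := le_iSup (fun j : Fin n => ℓ1 ((a j + b j) • y j)) (Fin.castLE hrn i)
  · rw [hsupw]
    exact iSup_congr fun i => hN1.smul_eq (c i) (y (Fin.castLE hrn i))
end
end

section
/- Given a singular value decomposition ((y_1, …, y_n), (x_1, …, x_m)) for a two-term Floer-type complex (C_1 →∂ C_0) with r = rank ∂, the generalized boundary depths are given by β_k(∂) = ℓ(y_k) − ℓ(x_k) for 1 ≤ k ≤ r, and β_k(∂) = 0 for k > r. In particular, the quantities ℓ(y_k) − ℓ(x_k) are independent of the choice of singular value decomposition. -/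
/-!
Formalization setup following Usher–Zhang, "Persistent homology and Floer–Novikov theory".

We fix an additive subgroup `Γ ≤ ℝ` and abstract the Novikov field `Λ = Λ^{K,Γ}` as a field
`Λ` equipped with a valuation `ν : Λ → ℝ ∪ {∞}` (encoded in `EReal`, with `ν x = ⊤ ↔ x = 0`)
satisfying (V1),(V2),(V3), whose values on nonzero elements lie in (and fill out) `Γ`.

Filtration functions `ℓ : C → ℝ ∪ {-∞}` are encoded as `EReal`-valued functions which never
take the value `⊤`, with `ℓ x = ⊥ ↔ x = 0`.
-/

noncomputable section

/-- An element `x ∈ C₀` is `δ`-robust (Definition 4.5) if every `y` with `∂ y = x` has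
`ℓ(y) > ℓ(x) + δ`. -/
def IsRobustElem {Λ : Type*} [Field Λ] {C1 C0 : Type*} [AddCommGroup C1] [Module Λ C1]
    [AddCommGroup C0] [Module Λ C0] (ℓ1 : C1 → EReal) (ℓ0 : C0 → EReal)
    (bd : C1 →ₗ[Λ] C0) (δ : ℝ) (x : C0) : Prop :=
  ∀ y : C1, bd y = x → ℓ0 x + (δ : EReal) < ℓ1 y

/-- A subspace `V ≤ C₀` is `δ`-robust if every nonzero element of `V` is `δ`-robust. -/
def IsRobustSubspace {Λ : Type*} [Field Λ] {C1 C0 : Type*} [AddCommGroup C1] [Module Λ C1]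
    [AddCommGroup C0] [Module Λ C0] (ℓ1 : C1 → EReal) (ℓ0 : C0 → EReal)
    (bd : C1 →ₗ[Λ] C0) (δ : ℝ) (V : Submodule Λ C0) : Prop :=
  ∀ x ∈ V, x ≠ 0 → IsRobustElem ℓ1 ℓ0 bd δ x

/-- The generalized boundary depth `β_k(∂)` (Definition 4.6): the supremum of `{0}` together
with all `δ ≥ 0` admitting a `δ`-robust `k`-dimensional subspace of `Im ∂`. -/
noncomputable def genBoundaryDepth {Λ : Type*} [Field Λ] {C1 C0 : Type*}
    [AddCommGroup C1] [Module Λ C1] [AddCommGroup C0] [Module Λ C0]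
    (ℓ1 : C1 → EReal) (ℓ0 : C0 → EReal) (bd : C1 →ₗ[Λ] C0) (k : ℕ) : EReal :=
  sSup (insert (0 : EReal)
    {e : EReal | ∃ δ : ℝ, 0 ≤ δ ∧ e = (δ : EReal) ∧
      ∃ V : Submodule Λ C0, V ≤ LinearMap.range bd ∧
        Module.finrank Λ ↥V = k ∧ IsRobustSubspace ℓ1 ℓ0 bd δ V})

private lemma exists_real_of_ne {a : EReal} (hb : a ≠ ⊥) (ht : a ≠ ⊤) :
    ∃ r : ℝ, a = (r : EReal) := by
  induction a with
  | bot => exact absurd rfl hb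
  | coe r => exact ⟨r, rfl⟩
  | top => exact absurd rfl ht

private lemma sum_eq_sum_castLE {M : Type*} [AddCommMonoid M] {k m : ℕ} (h : k ≤ m)
    (g : Fin m → M) (hg : ∀ j : Fin m, k ≤ (j : ℕ) → g j = 0) :
    ∑ j : Fin m, g j = ∑ j : Fin k, g (Fin.castLE h j) := by
  have h1 : ∑ j : Fin m, g j = ∑ j ∈ Finset.univ.map (Fin.castLEEmb h), g j := by
    refine (Finset.sum_subset (Finset.subset_univ _) ?_).symm
    intro j _ hj
    refine hg j ?_
    by_contra hlt
    push_neg at hlt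
    exact hj (Finset.mem_map.2 ⟨⟨(j : ℕ), hlt⟩, Finset.mem_univ _, by ext; simp⟩)
  rw [h1, Finset.sum_map]
  rfl
/-- Theorem 4.11: given a singular value decomposition
`((y₁,…,yₙ), (x₁,…,xₘ))` of the boundary map of a two-term Floer-type complex, of rank `r`,
the generalized boundary depths satisfy `β_k(∂) = ℓ(y_k) - ℓ(x_k)` for `1 ≤ k ≤ r` and
`β_k(∂) = 0` for `k > r`; in particular they do not depend on the chosen decomposition. -/
theorem gen_boundary_depth_eq_svd
    {Γ : AddSubgroup ℝ} {Λ : Type*} [Field Λ] (NS : NovikovStructure Γ Λ)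
    {C1 C0 : Type*} [AddCommGroup C1] [Module Λ C1] [AddCommGroup C0] [Module Λ C0]
    {ℓ1 : C1 → EReal} {ℓ0 : C0 → EReal}
    (h1 : IsOrthogonalizable NS ℓ1) (h0 : IsOrthogonalizable NS ℓ0)
    (bd : C1 →ₗ[Λ] C0) (hbd : ∀ z : C1, ℓ0 (bd z) ≤ ℓ1 z)
    {r n m : ℕ} (hrn : r ≤ n) (hrm : r ≤ m)
    (y : Module.Basis (Fin n) Λ C1) (x : Module.Basis (Fin m) Λ C0)
    (hsvd : IsSVD ℓ1 ℓ0 bd hrn hrm y x) :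
    (∀ i : Fin r, genBoundaryDepth ℓ1 ℓ0 bd ((i : ℕ) + 1) =
      ℓ1 (y (Fin.castLE hrn i)) - ℓ0 (x (Fin.castLE hrm i))) ∧
    (∀ k : ℕ, r < k → genBoundaryDepth ℓ1 ℓ0 bd k = 0) := by
  classical
  obtain ⟨hy, hx, hAyx, hAy0, hker, hrange, hmono⟩ := hsvd
  have hN1 := h1.1
  have hN0 := h0.1
  haveI : Module.Finite Λ C0 := Module.Finite.of_basis x
  have hbot1 : ℓ1 0 = ⊥ := (hN1.eq_bot_iff 0).2 rfl
  have hbot0 : ℓ0 0 = ⊥ := (hN0.eq_bot_iff 0).2 rfl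
  choose A hA using fun j : Fin n =>
    exists_real_of_ne (fun h => y.ne_zero j ((hN1.eq_bot_iff _).1 h)) (hN1.ne_top (y j))
  choose B hB using fun j : Fin m =>
    exists_real_of_ne (fun h => x.ne_zero j ((hN0.eq_bot_iff _).1 h)) (hN0.ne_top (x j))
  set d : Fin r → ℝ := fun i => A (Fin.castLE hrn i) - B (Fin.castLE hrm i) with hd_def
  have hd0 : ∀ i : Fin r, 0 ≤ d i := by
    intro i
    have h := hbd (y (Fin.castLE hrn i))
    rw [hAyx i, hA, hB] at h
    have h2 := EReal.coe_le_coe_iff.1 h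
    simp only [hd_def]
    linarith
  have hdm : ∀ i j : Fin r, i ≤ j → d j ≤ d i := by
    intro i j hij
    have h := hmono i j hij
    rw [hA, hA, hB, hB, ← EReal.coe_sub, ← EReal.coe_sub] at h
    exact EReal.coe_le_coe_iff.1 h
  have hsm1 : ∀ (c : Λ) (j : Fin n) (g : ℝ), NS.ν c = (g : EReal) →
      ℓ1 (c • y j) = ((A j - g : ℝ) : EReal) := by
    intro c j g hg
    rw [hN1.smul_eq, hA, hg, EReal.coe_sub]
  have hsm0 : ∀ (c : Λ) (j : Fin m) (g : ℝ), NS.ν c = (g : EReal) →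
      ℓ0 (c • x j) = ((B j - g : ℝ) : EReal) := by
    intro c j g hg
    rw [hN0.smul_eq, hB, hg, EReal.coe_sub]
  have hν : ∀ c : Λ, c ≠ 0 → ∃ g : ℝ, NS.ν c = (g : EReal) := by
    intro c hc
    obtain ⟨g, hg⟩ := NS.ν_mem c hc
    exact ⟨(g : ℝ), hg⟩
  have hsup0 : ∀ v : C0, ℓ0 v = ⨆ j, ℓ0 (x.repr v j • x j) := by
    intro v
    conv_lhs => rw [← x.sum_repr v]
    exact hx _
  -- Upper bound: any (i+1)-dimensional δ-robust subspace forces δ < d i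
  have hub : ∀ (i : Fin r) (δ : ℝ), 0 ≤ δ →
      (∃ V : Submodule Λ C0, V ≤ LinearMap.range bd ∧
        Module.finrank Λ ↥V = (i : ℕ) + 1 ∧ IsRobustSubspace ℓ1 ℓ0 bd δ V) → δ < d i := by
    intro i δ hδ hV
    obtain ⟨V, hVle, hVrank, hVrob⟩ := hV
    have him : (i : ℕ) ≤ m := le_trans (le_of_lt i.isLt) hrm
    let φ : V →ₗ[Λ] (Fin (i : ℕ) → Λ) :=
      { toFun := fun v j => x.repr (v : C0) (Fin.castLE him j)
        map_add' := by intro a b; funext j; simp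
        map_smul' := by intro c a; funext j; simp }
    have hkerφ : LinearMap.ker φ ≠ ⊥ := by
      apply LinearMap.ker_ne_bot_of_finrank_lt
      rw [hVrank, Module.finrank_fin_fun]
      omega
    obtain ⟨v, hvker, hv0⟩ := Submodule.exists_mem_ne_zero_of_ne_bot hkerφ
    have hvc0 : (v : C0) ≠ 0 := fun h => hv0 (Subtype.ext h)
    have hvlow : ∀ j : Fin m, (j : ℕ) < (i : ℕ) → x.repr (v : C0) j = 0 := by
      intro j hj
      exact congrFun (LinearMap.mem_ker.1 hvker) ⟨(j : ℕ), hj⟩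
    have hvhigh : ∀ j : Fin m, r ≤ (j : ℕ) → x.repr (v : C0) j = 0 := by
      intro j hj
      have hmem : (v : C0) ∈ Submodule.span Λ (⇑x '' {j : Fin m | (j : ℕ) < r}) := by
        rw [← hrange]
        exact hVle v.2
      have hsupp := x.mem_span_image.1 hmem
      by_contra h
      have h2 := hsupp (Finsupp.mem_support_iff.2 h)
      simp only [Set.mem_setOf_eq] at h2
      omega
    set μ : Fin n → Λ := fun j =>
      if h : (j : ℕ) < r then x.repr (v : C0) (Fin.castLE hrm ⟨(j : ℕ), h⟩) else 0 with hμ_def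
    set w : C1 := ∑ j : Fin n, μ j • y j with hw_def
    have hbdw : bd w = (v : C0) := by
      have h1 : bd w = ∑ j : Fin n, μ j • bd (y j) := by
        rw [hw_def, map_sum]
        simp_rw [map_smul]
      have h2 : ∑ j : Fin n, μ j • bd (y j)
          = ∑ j : Fin r, μ (Fin.castLE hrn j) • bd (y (Fin.castLE hrn j)) :=
        sum_eq_sum_castLE hrn _ (fun j hj => by rw [hAy0 j hj, smul_zero])
      have h3 : ∑ j : Fin m, x.repr (v : C0) j • x j
          = ∑ j : Fin r, x.repr (v : C0) (Fin.castLE hrm j) • x (Fin.castLE hrm j) :=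
        sum_eq_sum_castLE hrm _ (fun j hj => by rw [hvhigh j hj, zero_smul])
      rw [h1, h2, ← x.sum_repr (v : C0), h3]
      refine Finset.sum_congr rfl fun j _ => ?_
      rw [hAyx j]
      congr 1
      simp only [hμ_def]
      rw [dif_pos (show ((Fin.castLE hrn j : Fin n) : ℕ) < r from j.isLt)]
      congr 1
    have hlw : ℓ1 w ≤ ℓ0 (v : C0) + ((d i : ℝ) : EReal) := by
      rw [hw_def, hy μ]
      refine iSup_le fun j => ?_
      by_cases hj0 : μ j = 0
      · rw [hj0, zero_smul, hbot1]
        exact bot_le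
      · have hjr : (j : ℕ) < r := by
          by_contra hc
          exact hj0 (by simp only [hμ_def]; exact dif_neg hc)
        set j' : Fin r := ⟨(j : ℕ), hjr⟩ with hj'_def
        have hij : i ≤ j' := by
          by_contra hc
          push_neg at hc
          refine hj0 ?_
          simp only [hμ_def]
          rw [dif_pos hjr]
          exact hvlow _ hc
        have hμj : μ j = x.repr (v : C0) (Fin.castLE hrm j') := by
          simp only [hμ_def]
          rw [dif_pos hjr]
        obtain ⟨g, hg⟩ := hν (μ j) hj0
        have hcj : Fin.castLE hrn j' = j := Fin.ext rfl
        calc ℓ1 (μ j • y j) = ((A j - g : ℝ) : EReal) := hsm1 _ _ _ hg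
          _ = ((B (Fin.castLE hrm j') - g : ℝ) : EReal) + ((d j' : ℝ) : EReal) := by
              rw [← EReal.coe_add, EReal.coe_eq_coe_iff]
              simp only [hd_def, hcj]
              ring
          _ ≤ ((B (Fin.castLE hrm j') - g : ℝ) : EReal) + ((d i : ℝ) : EReal) :=
              add_le_add_right (EReal.coe_le_coe_iff.2 (hdm i j' hij)) _
          _ = ℓ0 (μ j • x (Fin.castLE hrm j')) + ((d i : ℝ) : EReal) := by
              rw [hsm0 _ _ _ hg]
          _ ≤ ℓ0 (v : C0) + ((d i : ℝ) : EReal) := by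
              refine add_le_add_left ?_ _
              rw [hsup0 (v : C0)]
              have h4 := le_iSup (fun j'' => ℓ0 (x.repr (v : C0) j'' • x j'')) (Fin.castLE hrm j')
              rw [← hμj] at h4
              exact h4
    have hrob := hVrob (v : C0) v.2 hvc0 w hbdw
    obtain ⟨c, hc⟩ := exists_real_of_ne (fun h => hvc0 ((hN0.eq_bot_iff _).1 h)) (hN0.ne_top _)
    rw [hc] at hrob hlw
    have h5 := lt_of_lt_of_le hrob hlw
    rw [← EReal.coe_add, ← EReal.coe_add] at h5
    have h6 := EReal.coe_lt_coe_iff.1 h5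
    linarith
  -- Lower bound: the span of x_0,…,x_i is δ-robust for every δ < d i
  have hlb : ∀ (i : Fin r) (δ : ℝ), 0 ≤ δ → δ < d i →
      ∃ V : Submodule Λ C0, V ≤ LinearMap.range bd ∧
        Module.finrank Λ ↥V = (i : ℕ) + 1 ∧ IsRobustSubspace ℓ1 ℓ0 bd δ V := by
    intro i δ hδ hδd
    have him : (i : ℕ) + 1 ≤ m := le_trans i.isLt hrm
    refine ⟨Submodule.span Λ (Set.range (⇑x ∘ Fin.castLE him)),
      ?_, ?_, ?_⟩
    · rw [hrange]
      apply Submodule.span_mono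
      rintro _ ⟨j, rfl⟩
      refine ⟨Fin.castLE him j, ?_, rfl⟩
      simp only [Set.mem_setOf_eq, Fin.coe_castLE]
      have ha := j.isLt
      have hb := i.isLt
      omega
    · rw [finrank_span_eq_card ((x.linearIndependent).comp _ (Fin.castLE_injective him))]
      simp
    · intro v hv hv0 w hbdw
      have hsupp : ∀ j : Fin m, (i : ℕ) < (j : ℕ) → x.repr v j = 0 := by
        intro j hj
        have hmem : v ∈ Submodule.span Λ (⇑x '' {j : Fin m | (j : ℕ) < (i : ℕ) + 1}) := by
          refine Submodule.span_mono ?_ hv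
          rintro _ ⟨j', rfl⟩
          exact ⟨Fin.castLE him j', j'.isLt, rfl⟩
        have h2 := x.mem_span_image.1 hmem
        by_contra h
        have h3 := h2 (Finsupp.mem_support_iff.2 h)
        simp only [Set.mem_setOf_eq] at h3
        omega
      set μ := y.repr w with hμ
      have h1 : bd w = ∑ j : Fin n, μ j • bd (y j) := by
        conv_lhs => rw [← y.sum_repr w]
        rw [map_sum]
        simp_rw [map_smul]
        rfl
      have h2 : ∑ j : Fin n, μ j • bd (y j)
          = ∑ j : Fin r, μ (Fin.castLE hrn j) • x (Fin.castLE hrm j) := by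
        rw [sum_eq_sum_castLE hrn _ (fun j hj => by rw [hAy0 j hj, smul_zero])]
        exact Finset.sum_congr rfl fun j _ => by rw [hAyx j]
      set lam : Fin m → Λ := fun j =>
        if h : (j : ℕ) < r then μ (Fin.castLE hrn ⟨(j : ℕ), h⟩) else 0 with hlam
      have h3 : v = ∑ j : Fin m, lam j • x j := by
        rw [← hbdw, h1, h2,
          sum_eq_sum_castLE hrm (fun j => lam j • x j)
            (fun j hj => by simp only [hlam]; rw [dif_neg (by omega), zero_smul])]
        refine Finset.sum_congr rfl fun j _ => ?_
        congr 1
        simp only [hlam]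
        rw [dif_pos (show ((Fin.castLE hrm j : Fin m) : ℕ) < r from j.isLt)]
        congr 1
      have hreprv : ∀ j : Fin m, x.repr v j = lam j := by
        intro j
        rw [h3]
        exact congrFun (x.repr_sum_self lam) j
      have hne : (Finset.univ : Finset (Fin m)).Nonempty :=
        Finset.univ_nonempty_iff.2 (Fin.pos_iff_nonempty.1 (by omega))
      obtain ⟨j₀, _, hj₀max⟩ := Finset.exists_max_image Finset.univ
        (fun j => ℓ0 (x.repr v j • x j)) hne
      have hl0v : ℓ0 v = ℓ0 (x.repr v j₀ • x j₀) := by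
        refine le_antisymm ?_ ?_
        · rw [hsup0 v]
          exact iSup_le fun j => hj₀max j (Finset.mem_univ j)
        · rw [hsup0 v]
          exact le_iSup (fun j => ℓ0 (x.repr v j • x j)) j₀
      have hlam0 : x.repr v j₀ ≠ 0 := by
        intro h
        rw [h, zero_smul, hbot0] at hl0v
        exact hv0 ((hN0.eq_bot_iff v).1 hl0v)
      have hj₀i : (j₀ : ℕ) ≤ (i : ℕ) := by
        by_contra h
        push_neg at h
        exact hlam0 (hsupp j₀ h)
      have hj₀r : (j₀ : ℕ) < r := by
        have hb := i.isLt
        omega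
      set j₀' : Fin r := ⟨(j₀ : ℕ), hj₀r⟩ with hj₀'
      obtain ⟨g, hg⟩ := hν _ hlam0
      have hcast : Fin.castLE hrm j₀' = j₀ := Fin.ext rfl
      have hl0v' : ℓ0 v = ((B j₀ - g : ℝ) : EReal) := by
        rw [hl0v, hsm0 _ _ _ hg]
      have hμeq : μ (Fin.castLE hrn j₀') = x.repr v j₀ := by
        rw [hreprv j₀]
        simp only [hlam]
        rw [dif_pos hj₀r]
      have hlw : ((B j₀ - g + d i : ℝ) : EReal) ≤ ℓ1 w := by
        have h4 : ℓ1 w = ⨆ j, ℓ1 (μ j • y j) := by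
          conv_lhs => rw [← y.sum_repr w]
          exact hy _
        rw [h4]
        refine le_trans ?_ (le_iSup (fun j => ℓ1 (μ j • y j)) (Fin.castLE hrn j₀'))
        rw [hμeq, hsm1 _ _ _ hg, EReal.coe_le_coe_iff]
        have hji : j₀' ≤ i := hj₀i
        have h5 := hdm j₀' i hji
        have hAB : d j₀' = A (Fin.castLE hrn j₀') - B j₀ := by
          simp only [hd_def, hcast]
        linarith
      calc ℓ0 v + (δ : EReal) = ((B j₀ - g + δ : ℝ) : EReal) := by
            rw [hl0v', ← EReal.coe_add]
        _ < ((B j₀ - g + d i : ℝ) : EReal) := EReal.coe_lt_coe_iff.2 (by linarith)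
        _ ≤ ℓ1 w := hlw
  constructor
  · intro i
    rw [hA, hB, ← EReal.coe_sub]
    show genBoundaryDepth ℓ1 ℓ0 bd ((i : ℕ) + 1) = ((d i : ℝ) : EReal)
    simp only [genBoundaryDepth]
    refine le_antisymm ?_ ?_
    · refine sSup_le fun e he => ?_
      rcases Set.mem_insert_iff.1 he with rfl | ⟨δ, hδ0, rfl, hV⟩
      · exact EReal.coe_nonneg.2 (hd0 i)
      · exact le_of_lt (EReal.coe_lt_coe_iff.2 (hub i δ hδ0 hV))
    · refine le_of_forall_lt_imp_le_of_dense fun c hc => ?_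
      rcases le_or_gt c 0 with h | h
      · exact le_trans h (le_sSup (Set.mem_insert _ _))
      · obtain ⟨δ, rfl⟩ := exists_real_of_ne (ne_bot_of_gt h) (ne_top_of_lt hc)
        refine le_sSup (Set.mem_insert_of_mem _ ?_)
        exact ⟨δ, le_of_lt (EReal.coe_pos.1 h), rfl,
          hlb i δ (le_of_lt (EReal.coe_pos.1 h)) (EReal.coe_lt_coe_iff.1 hc)⟩
  · intro k hk
    simp only [genBoundaryDepth]
    have hfr : Module.finrank Λ ↥(LinearMap.range bd) = r := by
      rw [hrange]
      have himg : ⇑x '' {j : Fin m | (j : ℕ) < r}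
          = Set.range (⇑x ∘ Fin.castLE hrm) := by
        ext z
        constructor
        · rintro ⟨j, hj, rfl⟩
          exact ⟨⟨(j : ℕ), hj⟩, rfl⟩
        · rintro ⟨j, rfl⟩
          exact ⟨Fin.castLE hrm j, j.isLt, rfl⟩
      rw [himg, finrank_span_eq_card ((x.linearIndependent).comp _ (Fin.castLE_injective hrm))]
      simp
    refine le_antisymm ?_ (le_sSup (Set.mem_insert _ _))
    refine sSup_le fun e he => ?_
    rcases Set.mem_insert_iff.1 he with rfl | ⟨δ, hδ0, rfl, V, hVle, hVrank, -⟩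
    · exact le_refl _
    · exfalso
      have h2 := Submodule.finrank_mono hVle
      rw [hVrank, hfr] at h2
      omega
end
end

section
/- Let (C, ℓ) be an orthogonalizable Λ^{K,Γ}-space with orthogonal ordered basis (v_1, …, v_n), and for s ∈ ℝ/Γ let μ(s) = #{i : ℓ(v_i) ≡ s mod Γ} (the multiplicity of s in the filtration spectrum). Then for every s ∈ ℝ/Γ, μ(s) = max{k ∈ ℕ : there exists a subspace V ≤ C with dim V = k such that every v ∈ V ∖ {0} satisfies ℓ(v) ≡ s mod Γ}. In particular the filtration spectrum is independent of the choice of orthogonal basis. -/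
/-!
Formalization setup following Usher–Zhang, "Persistent homology and Floer–Novikov theory".

We fix an additive subgroup `Γ ≤ ℝ` and abstract the Novikov field `Λ = Λ^{K,Γ}` as a field
`Λ` equipped with a valuation `ν : Λ → ℝ ∪ {∞}` (encoded in `EReal`, with `ν x = ⊤ ↔ x = 0`)
satisfying (V1),(V2),(V3), whose values on nonzero elements lie in (and fill out) `Γ`.

Filtration functions `ℓ : C → ℝ ∪ {-∞}` are encoded as `EReal`-valued functions which never
take the value `⊤`, with `ℓ x = ⊥ ↔ x = 0`.
-/

noncomputable section

/-- Key lemma: for nonzero `w`, there is a basis index `j` with nonzero coefficient such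
that `ℓ w` is congruent to `ℓ (v j)` mod `Γ`. -/
theorem key_congr {Γ : AddSubgroup ℝ} {Λ : Type*} [Field Λ] (NS : NovikovStructure Γ Λ)
    {C : Type*} [AddCommGroup C] [Module Λ C] {ℓ : C → EReal}
    (hna : IsNonArchNorm NS ℓ) {n : ℕ} (v : Module.Basis (Fin n) Λ C)
    (hv : IsOrthFamily Λ ℓ ⇑v) {w : C} (hw : w ≠ 0) :
    ∃ j : Fin n, v.repr w j ≠ 0 ∧ -(ℓ w).toReal + (ℓ (v j)).toReal ∈ Γ := by
  classical
  have hne : Nonempty (Fin n) := by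
    rcases Finsupp.ne_iff.1 (fun h => hw (by simpa [h] using (v.sum_repr w).symm) : v.repr w ≠ 0)
      with ⟨j, _⟩
    exact ⟨j⟩
  have hl : ℓ w = ⨆ i, ℓ (v.repr w i • v i) := by
    conv_lhs => rw [← v.sum_repr w]
    exact hv _
  obtain ⟨j, hj⟩ := exists_eq_ciSup_of_finite (f := fun i => ℓ (v.repr w i • v i))
  rw [← hl] at hj
  have hwbot : ℓ w ≠ ⊥ := fun h => hw ((hna.eq_bot_iff w).1 h)
  have haj : v.repr w j ≠ 0 := by
    intro h
    rw [h, zero_smul] at hj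
    exact hwbot (hj ▸ (hna.eq_bot_iff 0).2 rfl)
  obtain ⟨g, hg⟩ := NS.ν_mem _ haj
  have hvj0 : v j ≠ 0 := v.ne_zero j
  have hvjbot : ℓ (v j) ≠ ⊥ := fun h => hvj0 ((hna.eq_bot_iff _).1 h)
  have hvjtop : ℓ (v j) ≠ ⊤ := hna.ne_top _
  have hvjr : ℓ (v j) = (((ℓ (v j)).toReal : ℝ) : EReal) := (EReal.coe_toReal hvjtop hvjbot).symm
  have : ℓ w = (((ℓ (v j)).toReal - (g : ℝ) : ℝ) : EReal) := by
    rw [← hj, hna.smul_eq, hg, EReal.coe_sub, EReal.coe_toReal hvjtop hvjbot]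
  refine ⟨j, haj, ?_⟩
  have h2 : (ℓ w).toReal = (ℓ (v j)).toReal - (g : ℝ) := by rw [this, EReal.toReal_coe]
  rw [h2]
  have : -((ℓ (v j)).toReal - (g : ℝ)) + (ℓ (v j)).toReal = (g : ℝ) := by ring
  rw [this]
  exact g.2

/-- Proposition 5.5: for an orthogonalizable `Λ^{K,Γ}`-space `(C, ℓ)` with
orthogonal ordered basis `(v₁, …, vₙ)`, the multiplicity `μ(s) = #{i : ℓ(vᵢ) ≡ s mod Γ}` of
any `s ∈ ℝ/Γ` in the filtration spectrum equals the maximal dimension of a subspace all of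
whose nonzero elements have filtration level congruent to `s` mod `Γ`; in particular the
filtration spectrum does not depend on the choice of orthogonal basis. -/
theorem filtration_spectrum_multiplicity
    {Γ : AddSubgroup ℝ} {Λ : Type*} [Field Λ] (NS : NovikovStructure Γ Λ)
    {C : Type*} [AddCommGroup C] [Module Λ C] {ℓ : C → EReal}
    (hna : IsNonArchNorm NS ℓ) {n : ℕ} (v : Module.Basis (Fin n) Λ C)
    (hv : IsOrthFamily Λ ℓ ⇑v) (s : ℝ ⧸ Γ) :
    Nat.card {i : Fin n // (QuotientAddGroup.mk ((ℓ (v i)).toReal) : ℝ ⧸ Γ) = s} =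
      sSup {k : ℕ | ∃ V : Submodule Λ C, Module.finrank Λ ↥V = k ∧
        ∀ w ∈ V, w ≠ 0 → (QuotientAddGroup.mk ((ℓ w).toReal) : ℝ ⧸ Γ) = s} := by
  classical
  have hFD : FiniteDimensional Λ C := Module.Finite.of_basis v
  set P : Fin n → Prop := fun i => (QuotientAddGroup.mk ((ℓ (v i)).toReal) : ℝ ⧸ Γ) = s with hP
  set T : Set ℕ := {k : ℕ | ∃ V : Submodule Λ C, Module.finrank Λ ↥V = k ∧
        ∀ w ∈ V, w ≠ 0 → (QuotientAddGroup.mk ((ℓ w).toReal) : ℝ ⧸ Γ) = s} with hT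
  have hcard : Nat.card {i : Fin n // P i} = Fintype.card {i : Fin n // P i} :=
    Nat.card_eq_fintype_card
  -- membership of μ(s) in T
  have hmem : Nat.card {i : Fin n // P i} ∈ T := by
    refine ⟨Submodule.span Λ (⇑v '' {i | P i}), ?_, ?_⟩
    · have hli : LinearIndependent Λ (fun i : {i : Fin n // P i} => v i) :=
        v.linearIndependent.comp Subtype.val Subtype.val_injective
      have hrange : Set.range (fun i : {i : Fin n // P i} => v i) = ⇑v '' {i | P i} := by
        ext x; simp [Set.mem_image]
      rw [← hrange, finrank_span_eq_card hli, hcard]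
    · intro w hwmem hw0
      obtain ⟨j, hj, hjΓ⟩ := key_congr NS hna v hv hw0
      have hsupp : ↑(v.repr w).support ⊆ {i | P i} := v.mem_span_image.1 hwmem
      have hPj : P j := hsupp (Finsupp.mem_support_iff.2 hj)
      have : (QuotientAddGroup.mk ((ℓ w).toReal) : ℝ ⧸ Γ)
          = QuotientAddGroup.mk ((ℓ (v j)).toReal) := QuotientAddGroup.eq.2 hjΓ
      rw [this]; exact hPj
  -- every element of T is at most μ(s)
  have hub : ∀ k ∈ T, k ≤ Nat.card {i : Fin n // P i} := by
    rintro k ⟨V, hVrank, hVprop⟩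
    have hinj : Function.Injective
        ((LinearMap.pi fun i : {i : Fin n // P i} => v.coord (i : Fin n)).comp V.subtype) := by
      rw [← LinearMap.ker_eq_bot, LinearMap.ker_eq_bot']
      intro m hm
      by_contra hm0
      have hmne : (m : C) ≠ 0 := fun h => hm0 (Subtype.ext h)
      obtain ⟨j, hj, hjΓ⟩ := key_congr NS hna v hv hmne
      have hPj : P j := by
        have hs : (QuotientAddGroup.mk ((ℓ (m : C)).toReal) : ℝ ⧸ Γ) = s :=
          hVprop m m.2 hmne
        show (QuotientAddGroup.mk ((ℓ (v j)).toReal) : ℝ ⧸ Γ) = s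
        rw [← hs]
        exact (QuotientAddGroup.eq.2 hjΓ).symm
      have h0 := congrFun hm ⟨j, hPj⟩
      simp only [LinearMap.comp_apply, LinearMap.pi_apply, Module.Basis.coord_apply,
        Submodule.coe_subtype, Pi.zero_apply] at h0
      exact hj h0
    have := LinearMap.finrank_le_finrank_of_injective hinj
    rw [hVrank, Module.finrank_fintype_fun_eq_card] at this
    rw [hcard]; exact this
  exact le_antisymm (le_csSup ⟨_, hub⟩ hmem) (csSup_le ⟨_, hmem⟩ hub)
end
end
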